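/- Let T* be a finite rooted tree with nonnegative weights on its nodes, and let 0 < α < β ≤ 1 be constants. If T* contains no (α,β)-balanced node (i.e., no node f with α·w(T*) ≤ w(T*_f) ≤ β·w(T*), where T*_f is the subtree rooted at f and w(T*) is the total weight), then T* contains an (α,β)-critical node, i.e., a node f with w(T*_f) > β·w(T*) such that every child h of f satisfies w(T*_h) < α·w(T*). -/
import Mathlib


open scoped Classical in
/-- Subtree weight in a rooted tree given by a parent function. -/
noncomputable def subw {V : Type*} [Fintype V] (parent : V → V) (w : V → ℝ) (f : V) : ℝ :=
  ∑ v ∈ Finset.univ.filter (fun v => ∃ k, parent^[k] v = f), w v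

open scoped Classical in
/-- If a finite rooted tree with nonnegative node weights contains no
`(α,β)`-balanced node, then it contains an `(α,β)`-critical node. -/
theorem stmt0 {V : Type*} [Fintype V]
    (parent : V → V) (r : V) (hroot : parent r = r)
    (hreach : ∀ v, ∃ k, parent^[k] v = r)
    (w : V → ℝ) (hw : ∀ v, 0 ≤ w v)
    (α β : ℝ) (hα : 0 < α) (hαβ : α < β) (hβ : β ≤ 1)
    (hnobal : ∀ f : V, ¬ (α * (∑ v, w v) ≤ subw parent w f ∧
        subw parent w f ≤ β * (∑ v, w v))) :
    ∃ f : V, subw parent w f > β * (∑ v, w v) ∧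
      ∀ h : V, parent h = f → h ≠ f → subw parent w h < α * (∑ v, w v) := by
  set W : ℝ := ∑ v, w v with hW
  set S : V → Finset V := fun f => Finset.univ.filter (fun v => ∃ k, parent^[k] v = f)
    with hS
  have hsub : ∀ f, subw parent w f = ∑ v ∈ S f, w v := fun f => rfl
  have hself : ∀ f, f ∈ S f := by
    intro f; simp only [hS, Finset.mem_filter, Finset.mem_univ, true_and]
    exact ⟨0, rfl⟩
  have hWnn : 0 ≤ W := Finset.sum_nonneg fun v _ => hw v
  -- subtree of child is strictly contained in subtree of parent
  have hnocyc : ∀ f h : V, parent h = f → h ≠ f → f ∉ S h := by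
    intro f h hp hne hmem
    simp only [hS, Finset.mem_filter, Finset.mem_univ, true_and] at hmem
    obtain ⟨k, hk⟩ := hmem
    have hper : parent^[k + 1] f = f := by
      rw [Function.iterate_succ_apply', hk, hp]
    obtain ⟨m, hm⟩ := hreach f
    have hfr : f = r := by
      have h1 : parent^[(k + 1) * (m + 1)] f = f := by
        rw [Function.iterate_mul]
        exact Function.iterate_fixed hper (m + 1)
      have h2 : parent^[(k + 1) * (m + 1)] f = r := by
        have hle : m ≤ (k + 1) * (m + 1) := by nlinarith
        obtain ⟨d, hd⟩ := Nat.exists_eq_add_of_le hle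
        rw [hd, Nat.add_comm, Function.iterate_add_apply, hm,
          Function.iterate_fixed hroot]
      rw [← h1, h2]
    apply hne
    rw [← hk, hfr, Function.iterate_fixed hroot]
  have hssub : ∀ f h : V, parent h = f → h ≠ f → S h ⊂ S f := by
    intro f h hp hne
    constructor
    · intro v hv
      simp only [hS, Finset.mem_filter, Finset.mem_univ, true_and] at hv ⊢
      obtain ⟨k, hk⟩ := hv
      exact ⟨k + 1, by rw [Function.iterate_succ_apply', hk, hp]⟩
    · intro hcon
      exact hnocyc f h hp hne (hcon (hself f))
  -- key descent lemma
  have key : ∀ n : ℕ, ∀ f : V, (S f).card ≤ n → subw parent w f > β * W →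
      ∃ g : V, subw parent w g > β * W ∧
        ∀ h : V, parent h = g → h ≠ g → subw parent w h < α * W := by
    intro n
    induction n with
    | zero =>
      intro f hcard _
      exact absurd (Finset.card_pos.mpr ⟨f, hself f⟩) (by omega)
    | succ n ih =>
      intro f hcard hbig
      by_cases hall : ∀ h : V, parent h = f → h ≠ f → subw parent w h < α * W
      · exact ⟨f, hbig, hall⟩
      · push_neg at hall
        obtain ⟨h, hp, hne, hge⟩ := hall
        have hbig' : subw parent w h > β * W := by
          rcases lt_or_ge (β * W) (subw parent w h) with h' | h'
          · exact h'
          · exact absurd ⟨hge, h'⟩ (hnobal h)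
        have hlt : (S h).card < (S f).card :=
          Finset.card_lt_card (hssub f h hp hne)
        exact ih h (by omega) hbig'
  -- the root's subtree is everything
  have hSr : S r = Finset.univ := by
    apply Finset.eq_univ_of_forall
    intro v
    simp only [hS, Finset.mem_filter, Finset.mem_univ, true_and]
    exact hreach v
  have hsr : subw parent w r = W := by rw [hsub, hSr, hW]
  have hrbig : subw parent w r > β * W := by
    rcases lt_or_ge (β * W) (subw parent w r) with h' | h'
    · exact h'
    · refine absurd ⟨?_, h'⟩ (hnobal r)
      rw [hsr]
      nlinarith
  exact key (S r).card r le_rfl hrbig
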